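/- Let 1<p<∞ and let w be a weight on ℝ. Suppose there exists K>0 such that ‖w^{1/p}·M⁺f‖_{L^{p,∞}} ≤ K·‖f·w^{1/p}‖_{L^p} for every measurable function f with f·w^{1/p} ∈ L^p(ℝ). Then [w]_{A_p^{+,*}} < ∞, and moreover [w]_{A_p^{+,*}} ≤ c_p · K^p for a constant c_p depending only on p. -/

import Mathlib

open MeasureTheory Set ENNReal

/-- The one-sided (right) Hardy–Littlewood maximal operator
`M⁺f(x) = sup_{h>0} (1/h) ∫_x^{x+h} |f|`. -/
noncomputable def Mplus (f : ℝ → ℝ) (x : ℝ) : ℝ≥0∞ :=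
  ⨆ (h : ℝ) (_ : 0 < h),
    ENNReal.ofReal (1 / h) * ∫⁻ y in Set.Ioo x (x + h), ENNReal.ofReal |f y|

/-- The weak `L^p` quasinorm `sup_{t>0} t |{x : g(x) > t}|^{1/p}` of an
`ℝ≥0∞`-valued function. -/
noncomputable def weakNorm (p : ℝ) (g : ℝ → ℝ≥0∞) : ℝ≥0∞ :=
  ⨆ (t : ℝ) (_ : 0 < t),
    ENNReal.ofReal t * (volume {x : ℝ | ENNReal.ofReal t < g x}) ^ (1 / p)

/-- The weak `L^1` quasinorm `sup_{t>0} t |{x : |f(x)| > t}|` of a real function. -/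
noncomputable def weakL1 (f : ℝ → ℝ) : ℝ≥0∞ :=
  ⨆ (t : ℝ) (_ : 0 < t), ENNReal.ofReal t * volume {x : ℝ | t < |f x|}

/-- `[w]_{A_p^{+,*}} = sup_{a<b<c} (1/(c-a))^p ‖w χ_{(a,b)}‖_{L^{1,∞}}
(∫_b^c w^{-1/(p-1)})^{p-1}`. -/
noncomputable def ApStarPlusConst (p : ℝ) (w : ℝ → ℝ) : ℝ≥0∞ :=
  ⨆ (a : ℝ) (b : ℝ) (c : ℝ) (_ : a < b) (_ : b < c),
    ENNReal.ofReal (1 / (c - a)) ^ p * weakL1 (Set.indicator (Set.Ioo a b) w) *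
      (∫⁻ y in Set.Ioo b c, ENNReal.ofReal (w y ^ (-(1 / (p - 1))))) ^ (p - 1)


lemma aux_rpow_iSup {c : ℝ} (hc : 0 < c) (T : ℕ → ℝ≥0∞) :
    (⨆ n, T n) ^ c = ⨆ n, (T n) ^ c := by
  apply le_antisymm
  · have h1 : ∀ n, T n ≤ (⨆ m, (T m) ^ c) ^ (1 / c) := fun n => by
      have h2 : (T n) ^ c ≤ ⨆ m, (T m) ^ c := le_iSup (fun m => (T m) ^ c) n
      calc T n = ((T n) ^ c) ^ (1 / c) := by
            rw [← ENNReal.rpow_mul, mul_one_div_cancel hc.ne', ENNReal.rpow_one]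
        _ ≤ _ := ENNReal.rpow_le_rpow h2 (by positivity)
    calc (⨆ n, T n) ^ c ≤ ((⨆ m, (T m) ^ c) ^ (1 / c)) ^ c :=
          ENNReal.rpow_le_rpow (iSup_le h1) hc.le
      _ = ⨆ m, (T m) ^ c := by
          rw [← ENNReal.rpow_mul, one_div_mul_cancel hc.ne', ENNReal.rpow_one]
  · exact iSup_le fun n => ENNReal.rpow_le_rpow (le_iSup T n) hc.le

lemma aux_sup_min {a : ℝ} (ha : 0 ≤ a) :
    ⨆ n : ℕ, ENNReal.ofReal (min a n) = ENNReal.ofReal a := by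
  apply le_antisymm
  · exact iSup_le fun n => ENNReal.ofReal_le_ofReal (min_le_left _ _)
  · have h1 : ENNReal.ofReal a = ENNReal.ofReal (min a (⌈a⌉₊ : ℕ)) := by
      rw [min_eq_left (Nat.le_ceil a)]
    rw [h1]
    exact le_iSup (fun n : ℕ => ENNReal.ofReal (min a n)) ⌈a⌉₊

lemma aux_key {p : ℝ} (hp : 1 < p) {gx : ℝ} (hgx : 0 ≤ gx) (n : ℕ) :
    (min (gx ^ (-(1 / (p - 1)))) n * gx ^ (1 / p)) ^ p ≤ min (gx ^ (-(1 / (p - 1)))) n := by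
  have hp0 : (0:ℝ) < p := one_pos.trans hp
  have hpm : (0:ℝ) < p - 1 := sub_pos.mpr hp
  set σ := gx ^ (-(1 / (p - 1))) with hσ
  have hσ0 : 0 ≤ σ := Real.rpow_nonneg hgx _
  have hm0 : 0 ≤ min σ (n : ℝ) := le_min hσ0 (Nat.cast_nonneg n)
  rcases eq_or_lt_of_le hgx with hg0 | hg0
  · have hσz : σ = 0 := by
      rw [hσ, ← hg0]
      exact Real.zero_rpow (ne_of_lt (neg_lt_zero.mpr (by positivity)))
    rw [hσz]
    rw [min_eq_left (Nat.cast_nonneg n)]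
    rw [zero_mul, Real.zero_rpow hp0.ne']
  · have hσpos : 0 < σ := Real.rpow_pos_of_pos hg0 _
    have hg_eq : σ ^ (-(p - 1)) = gx := by
      rw [hσ, ← Real.rpow_mul hgx, neg_mul_neg, one_div_mul_cancel hpm.ne', Real.rpow_one]
    have h1 : (min σ n * gx ^ (1 / p)) ^ p = (min σ n) ^ p * gx := by
      rw [Real.mul_rpow hm0 (Real.rpow_nonneg hgx _), ← Real.rpow_mul hgx,
        one_div_mul_cancel hp0.ne', Real.rpow_one]
    rw [h1, ← hg_eq]
    rcases le_total σ (n : ℝ) with h | h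
    · rw [min_eq_left h, ← Real.rpow_add hσpos]
      have h2 : p + -(p - 1) = 1 := by ring
      rw [h2, Real.rpow_one]
    · rw [min_eq_right h]
      rcases Nat.eq_zero_or_pos n with hn | hn
      · simp [hn, Real.zero_rpow hp0.ne']
      have hn0 : (0:ℝ) < n := Nat.cast_pos.mpr hn
      have h2 : σ ^ (-(p - 1)) ≤ (n:ℝ) ^ (-(p - 1)) := by
        rw [Real.rpow_neg hσpos.le, Real.rpow_neg hn0.le]
        gcongr
      calc (n:ℝ) ^ p * σ ^ (-(p - 1)) ≤ (n:ℝ) ^ p * (n:ℝ) ^ (-(p - 1)) := by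
            apply mul_le_mul_of_nonneg_left h2 (Real.rpow_nonneg hn0.le _)
        _ = (n:ℝ) ^ (p + -(p - 1)) := (Real.rpow_add hn0 _ _).symm
        _ = (n:ℝ) := by
            have h3 : p + -(p - 1) = 1 := by ring
            rw [h3, Real.rpow_one]

theorem stmt3 (p : ℝ) (hp : 1 < p) :
    ∃ c : ℝ, 0 < c ∧
      ∀ w : ℝ → ℝ, (∀ x, 0 ≤ w x) → LocallyIntegrable w →
        ∀ K : ℝ, 0 < K →
        (∀ f : ℝ → ℝ, Measurable f →
            MemLp (fun x => f x * w x ^ (1 / p)) (ENNReal.ofReal p) →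
            weakNorm p (fun x => ENNReal.ofReal (w x ^ (1 / p)) * Mplus f x) ≤
              ENNReal.ofReal K *
                (∫⁻ x, ENNReal.ofReal (|f x| * w x ^ (1 / p)) ^ p) ^ (1 / p)) →
        ApStarPlusConst p w < ⊤ ∧
          ApStarPlusConst p w ≤ ENNReal.ofReal (c * K ^ p) := by
  refine ⟨1, one_pos, fun w hw0 hwloc K hK H => ?_⟩
  have hp0 : (0:ℝ) < p := one_pos.trans hp
  have hpm : (0:ℝ) < p - 1 := sub_pos.mpr hp
  suffices hmain : ApStarPlusConst p w ≤ ENNReal.ofReal (K ^ p) by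
    rw [one_mul]
    exact ⟨lt_of_le_of_lt hmain ofReal_lt_top, hmain⟩
  -- measurable representative
  obtain ⟨g, hgmeas, hgw, hg0⟩ : ∃ g : ℝ → ℝ, Measurable g ∧ g =ᵐ[volume] w ∧ ∀ x, 0 ≤ g x := by
    have hae := hwloc.aestronglyMeasurable.aemeasurable
    refine ⟨fun x => max (hae.mk w x) 0, hae.measurable_mk.max measurable_const, ?_,
      fun x => le_max_right _ _⟩
    filter_upwards [hae.ae_eq_mk] with x hx
    rw [← hx, max_eq_left (hw0 x)]
  set σ : ℝ → ℝ := fun y => g y ^ (-(1 / (p - 1))) with hσdef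
  have hσmeas : Measurable σ := by fun_prop
  have hσ0 : ∀ y, 0 ≤ σ y := fun y => Real.rpow_nonneg (hg0 y) _
  rw [ApStarPlusConst]
  refine iSup_le fun a => iSup_le fun b => iSup_le fun c => iSup_le fun hab =>
    iSup_le fun hbc => ?_
  have hac : a < c := hab.trans hbc
  have hca : (0:ℝ) < c - a := sub_pos.mpr hac
  have hTw : (∫⁻ y in Ioo b c, ENNReal.ofReal (w y ^ (-(1 / (p - 1))))) =
      ∫⁻ y in Ioo b c, ENNReal.ofReal (σ y) := by
    apply lintegral_congr_ae
    filter_upwards [ae_restrict_of_ae hgw] with y hy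
    rw [hσdef]
    simp only
    rw [hy]
  rw [hTw]
  set Tn : ℕ → ℝ≥0∞ := fun n => ∫⁻ y in Ioo b c, ENNReal.ofReal (min (σ y) n) with hTndef
  have hT_eq : (∫⁻ y in Ioo b c, ENNReal.ofReal (σ y)) = ⨆ n, Tn n := by
    have hm : ∀ n : ℕ, Measurable fun y => ENNReal.ofReal (min (σ y) n) := fun n => by fun_prop
    have hmono : Monotone fun (n : ℕ) (y : ℝ) => ENNReal.ofReal (min (σ y) n) :=
      fun m n hmn y => ENNReal.ofReal_le_ofReal (min_le_min le_rfl (Nat.cast_le.mpr hmn))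
    calc (∫⁻ y in Ioo b c, ENNReal.ofReal (σ y))
        = ∫⁻ y in Ioo b c, ⨆ n : ℕ, ENNReal.ofReal (min (σ y) n) :=
          lintegral_congr fun y => (aux_sup_min (hσ0 y)).symm
      _ = ⨆ n, Tn n := lintegral_iSup hm hmono
  rw [hT_eq, aux_rpow_iSup hpm, ENNReal.mul_iSup]
  refine iSup_le fun n => ?_
  -- per-n goal
  by_cases hTn0 : Tn n = 0
  · rw [hTn0, ENNReal.zero_rpow_of_pos hpm, mul_zero]
    exact zero_le
  have hTnlt : Tn n < ⊤ := by
    calc Tn n ≤ ∫⁻ _ in Ioo b c, ENNReal.ofReal n := by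
          exact lintegral_mono fun y => ENNReal.ofReal_le_ofReal (min_le_right _ _)
      _ = ENNReal.ofReal n * volume (Ioo b c) := by rw [setLIntegral_const]
      _ < ⊤ := by
          rw [Real.volume_Ioo]
          exact ENNReal.mul_lt_top ofReal_lt_top ofReal_lt_top
  set r := (Tn n).toReal with hrdef
  have hr0 : 0 < r := ENNReal.toReal_pos hTn0 hTnlt.ne
  have hTnr : Tn n = ENNReal.ofReal r := (ENNReal.ofReal_toReal hTnlt.ne).symm
  set f : ℝ → ℝ := (Ioo b c).indicator (fun y => min (σ y) n) with hfdef
  have hfmeas : Measurable f := (hσmeas.min measurable_const).indicator measurableSet_Ioo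
  have hf0 : ∀ x, 0 ≤ f x := fun x =>
    Set.indicator_nonneg (fun y _ => le_min (hσ0 y) (Nat.cast_nonneg n)) x
  have hptw : ∀ᵐ x, ENNReal.ofReal (|f x| * w x ^ (1 / p)) ^ p ≤ ENNReal.ofReal (f x) := by
    filter_upwards [hgw] with x hx
    rw [abs_of_nonneg (hf0 x), ← hx,
      ENNReal.ofReal_rpow_of_nonneg (mul_nonneg (hf0 x) (Real.rpow_nonneg (hg0 x) _)) hp0.le]
    apply ENNReal.ofReal_le_ofReal
    by_cases hxs : x ∈ Ioo b c
    · rw [hfdef]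
      simp only [indicator_of_mem hxs]
      exact aux_key hp (hg0 x) n
    · rw [hfdef]
      simp [indicator_of_notMem hxs, Real.zero_rpow hp0.ne']
  have hInt_le : (∫⁻ x, ENNReal.ofReal (|f x| * w x ^ (1 / p)) ^ p) ≤ Tn n := by
    calc (∫⁻ x, ENNReal.ofReal (|f x| * w x ^ (1 / p)) ^ p) ≤ ∫⁻ x, ENNReal.ofReal (f x) :=
        lintegral_mono_ae hptw
      _ = Tn n := by
        rw [hTndef]
        have h1 : (fun x => ENNReal.ofReal (f x)) =
            (Ioo b c).indicator (fun y => ENNReal.ofReal (min (σ y) n)) := by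
          funext x
          by_cases hxs : x ∈ Ioo b c <;> simp [hfdef, hxs]
        rw [h1, lintegral_indicator measurableSet_Ioo]
  have hmem : MemLp (fun x => f x * w x ^ (1 / p)) (ENNReal.ofReal p) := by
    constructor
    · refine ((hfmeas.mul (by fun_prop : Measurable fun x => g x ^ (1 / p))).aestronglyMeasurable).congr ?_
      filter_upwards [hgw] with x hx
      simp only [Pi.mul_apply]
      rw [hx]
    · rw [eLpNorm_eq_lintegral_rpow_enorm_toReal (ENNReal.ofReal_pos.mpr hp0).ne' ENNReal.ofReal_ne_top,
        ENNReal.toReal_ofReal hp0.le]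
      apply ENNReal.rpow_lt_top_of_nonneg (by positivity)
      have h1 : (∫⁻ x, (‖f x * w x ^ (1 / p)‖₊ : ℝ≥0∞) ^ p) ≤ Tn n := by
        refine le_trans (le_of_eq (lintegral_congr fun x => ?_)) hInt_le
        rw [← enorm_eq_nnnorm, ← ofReal_norm, Real.norm_eq_abs, abs_mul,
          abs_of_nonneg (Real.rpow_nonneg (hw0 x) _)]
      exact (lt_of_le_of_lt h1 hTnlt).ne
  have Hf := H f hfmeas hmem
  have hMplus : ∀ x ∈ Ioo a b, ENNReal.ofReal ((1 / (c - a)) * r) ≤ Mplus f x := by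
    intro x hx
    have hxc : (0:ℝ) < c - x := sub_pos.mpr (hx.2.trans hbc)
    have step1 : ENNReal.ofReal ((1 / (c - a)) * r) ≤
        ENNReal.ofReal (1 / (c - x)) * ∫⁻ y in Ioo x (x + (c - x)), ENNReal.ofReal |f y| := by
      rw [ENNReal.ofReal_mul (by positivity), ← hTnr]
      apply mul_le_mul'
      · exact ENNReal.ofReal_le_ofReal (one_div_le_one_div_of_le hxc (by linarith [hx.1]))
      · rw [hTndef]
        have hsub : Ioo b c ⊆ Ioo x (x + (c - x)) := fun y hy =>
          ⟨lt_trans hx.2 hy.1, by linarith [hy.2]⟩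
        calc (∫⁻ y in Ioo b c, ENNReal.ofReal (min (σ y) n)) =
              ∫⁻ y in Ioo b c, ENNReal.ofReal |f y| := by
              apply setLIntegral_congr_fun measurableSet_Ioo
              intro y hy
              dsimp only
              rw [hfdef, indicator_of_mem hy, abs_of_nonneg (le_min (hσ0 y) (Nat.cast_nonneg n))]
          _ ≤ _ := lintegral_mono_set hsub
    refine le_trans step1 ?_
    rw [Mplus]
    exact le_iSup₂ (f := fun h (_ : 0 < h) =>
      ENNReal.ofReal (1 / h) * ∫⁻ y in Ioo x (x + h), ENNReal.ofReal |f y|) (c - x) hxc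
  have hkey : ∀ s : ℝ, 0 < s →
      ENNReal.ofReal ((1 / (c - a)) ^ p * r ^ (p - 1)) *
        (ENNReal.ofReal s * volume {x | s < |((Ioo a b).indicator w) x|}) ≤
      ENNReal.ofReal (K ^ p) := by
    intro s hs
    have hset : {x | s < |((Ioo a b).indicator w) x|} = {x | x ∈ Ioo a b ∧ s < w x} := by
      ext x
      by_cases hxab : x ∈ Ioo a b
      · simp only [mem_setOf_eq, indicator_of_mem hxab, abs_of_nonneg (hw0 x)]
        exact ⟨fun h => ⟨hxab, h⟩, fun h => h.2⟩
      · simp only [mem_setOf_eq, indicator_of_notMem hxab, abs_zero]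
        exact ⟨fun h => absurd h (not_lt.mpr hs.le), fun h => absurd h.1 hxab⟩
    rw [hset]
    set E := {x | x ∈ Ioo a b ∧ s < w x} with hEdef
    set t := s ^ (1 / p) * ((1 / (c - a)) * r) with htdef
    have ht0 : 0 < t := by positivity
    have hsubset : E ⊆ {x : ℝ | ENNReal.ofReal t <
        ENNReal.ofReal (w x ^ (1 / p)) * Mplus f x} := by
      intro x hx
      obtain ⟨hxab, hxs⟩ := hx
      have hA0 : ENNReal.ofReal ((1 / (c - a)) * r) ≠ 0 :=
        (ENNReal.ofReal_pos.mpr (by positivity)).ne'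
      calc ENNReal.ofReal t = ENNReal.ofReal (s ^ (1 / p)) *
            ENNReal.ofReal ((1 / (c - a)) * r) := by
            rw [htdef, ENNReal.ofReal_mul (by positivity)]
        _ < ENNReal.ofReal (w x ^ (1 / p)) * ENNReal.ofReal ((1 / (c - a)) * r) := by
            rw [ENNReal.mul_lt_mul_iff_left hA0 ofReal_ne_top]
            exact (ENNReal.ofReal_lt_ofReal_iff
              (Real.rpow_pos_of_pos (hs.trans hxs) _)).mpr
              (Real.rpow_lt_rpow hs.le hxs (by positivity))
        _ ≤ ENNReal.ofReal (w x ^ (1 / p)) * Mplus f x :=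
            mul_le_mul' le_rfl (hMplus x hxab)
    have hw1 : ENNReal.ofReal t * (volume E) ^ (1 / p) ≤
        weakNorm p (fun x => ENNReal.ofReal (w x ^ (1 / p)) * Mplus f x) := by
      rw [weakNorm]
      refine le_trans ?_ (le_iSup₂ (f := fun t' (_ : 0 < t') => ENNReal.ofReal t' *
        (volume {x : ℝ | ENNReal.ofReal t' <
          ENNReal.ofReal (w x ^ (1 / p)) * Mplus f x}) ^ (1 / p)) t ht0)
      exact mul_le_mul' le_rfl (ENNReal.rpow_le_rpow (measure_mono hsubset) (by positivity))
    have hchain : ENNReal.ofReal t * (volume E) ^ (1 / p) ≤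
        ENNReal.ofReal K * (Tn n) ^ (1 / p) :=
      le_trans hw1 (le_trans Hf (mul_le_mul' le_rfl
        (ENNReal.rpow_le_rpow hInt_le (by positivity))))
    have hpow := ENNReal.rpow_le_rpow hchain hp0.le
    rw [ENNReal.mul_rpow_of_nonneg _ _ hp0.le, ENNReal.mul_rpow_of_nonneg _ _ hp0.le,
      ← ENNReal.rpow_mul, ← ENNReal.rpow_mul, one_div_mul_cancel hp0.ne',
      ENNReal.rpow_one, ENNReal.rpow_one,
      ENNReal.ofReal_rpow_of_nonneg ht0.le hp0.le,
      ENNReal.ofReal_rpow_of_nonneg hK.le hp0.le, hTnr] at hpow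
    have htp : t ^ p = (1 / (c - a)) ^ p * r ^ (p - 1) * s * r := by
      rw [htdef, Real.mul_rpow (by positivity) (by positivity),
        Real.mul_rpow (by positivity) hr0.le, ← Real.rpow_mul hs.le,
        one_div_mul_cancel hp0.ne', Real.rpow_one]
      have h4 : r ^ p = r ^ (p - 1) * r := by
        have h5 : r ^ (p - 1) * r = r ^ (p - 1) * r ^ (1 : ℝ) := by rw [Real.rpow_one]
        rw [h5, ← Real.rpow_add hr0]
        norm_num
      rw [h4]
      ring
    rw [htp] at hpow
    have hcancel : (ENNReal.ofReal ((1 / (c - a)) ^ p * r ^ (p - 1)) *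
        (ENNReal.ofReal s * volume E)) * ENNReal.ofReal r ≤
        ENNReal.ofReal (K ^ p) * ENNReal.ofReal r := by
      rw [show (1 / (c - a)) ^ p * r ^ (p - 1) * s * r
          = ((1 / (c - a)) ^ p * r ^ (p - 1)) * (s * r) by ring,
        ENNReal.ofReal_mul (by positivity : (0:ℝ) ≤ (1 / (c - a)) ^ p * r ^ (p - 1)),
        ENNReal.ofReal_mul hs.le] at hpow
      refine le_trans (le_of_eq ?_) hpow
      ring
    exact (ENNReal.mul_le_mul_iff_left (ENNReal.ofReal_pos.mpr hr0).ne' ofReal_ne_top).mp hcancel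
  -- conclude per-n
  rw [hTnr, ENNReal.ofReal_rpow_of_nonneg ENNReal.toReal_nonneg hpm.le,
    ENNReal.ofReal_rpow_of_nonneg (by positivity) hp0.le, weakL1]
  simp_rw [ENNReal.mul_iSup, ENNReal.iSup_mul]
  refine iSup_le fun s => iSup_le fun hs => ?_
  refine le_trans (le_of_eq ?_) (hkey s hs)
  rw [ENNReal.ofReal_mul (by positivity)]
  ring
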